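/- arXiv:1601.06655 — 10 statements merged into one kernel-verified Lean document; each statement's English description precedes it below -/
import Mathlib

section
/- Let 𝒯 be a class of R-modules and let ε : R → M be a 𝒯-envelope of the regular module R. Then every epimorphism α : N → M with N ∈ 𝒯 splits, i.e. there exists β : M → N with α ∘ β = id_M. -/
open CategoryTheory

universe u

/-- If `ε : R → M` is a `𝒯`-envelope of the regular module `R`, then every epimorphism
`α : N → M` with `N ∈ 𝒯` splits. -/
theorem envelope_epi_splits {R : Type u} [Ring R] (𝒯 : Set (ModuleCat.{u} R))
    (M : ModuleCat.{u} R) (hM : M ∈ 𝒯) (ε : ModuleCat.of R R ⟶ M)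
    (hpre : ∀ T' ∈ 𝒯, ∀ f : ModuleCat.of R R ⟶ T', ∃ g : M ⟶ T', ε ≫ g = f)
    (henv : ∀ α : M ⟶ M, ε ≫ α = ε → IsIso α)
    (N : ModuleCat.{u} R) (hN : N ∈ 𝒯) (α : N ⟶ M) (hα : Function.Surjective α) :
    ∃ β : M ⟶ N, β ≫ α = 𝟙 M := by
  obtain ⟨n, hn⟩ := hα (ε (1 : R))
  set f : ModuleCat.of R R ⟶ N := ModuleCat.ofHom (LinearMap.toSpanSingleton R N n) with hf
  have hfα : f ≫ α = ε := by
    refine ModuleCat.hom_ext (LinearMap.ext fun r => ?_)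
    show α (r • n) = ε r
    show α (r • n) = ε r
    have h1 : ε ((show R from r) • (1 : R)) = ε r := by
      rw [smul_eq_mul, mul_one]
    rw [map_smul, hn, ← h1, map_smul]
  obtain ⟨g, hg⟩ := hpre N hN f
  have : IsIso (g ≫ α) := henv (g ≫ α) (by rw [← Category.assoc, hg, hfα])
  exact ⟨inv (g ≫ α) ≫ g, by rw [Category.assoc, IsIso.inv_hom_id]⟩
end

section
/- Let 𝒯 be a class of R-modules closed under extensions, and let ε : R → M be a 𝒯-envelope of R. Then Ext¹_R(M, T) = 0 for every T ∈ 𝒯. -/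
open CategoryTheory Limits Opposite

universe u

/-- Key extension lemma: if `ε : R → M` is a `𝒯`-envelope, `T ∈ 𝒯`, and
`0 → A → P → M → 0` is exact, then every map `A → T` extends to `P`. -/
lemma envelope_extend_aux {R : Type u} [Ring R] (𝒯 : Set (ModuleCat.{u} R))
    (hext : ∀ (A B C : ModuleCat.{u} R) (ι : A ⟶ B) (π : B ⟶ C),
      A ∈ 𝒯 → C ∈ 𝒯 → Function.Injective ι → Function.Surjective π →
      Function.Exact ι π → B ∈ 𝒯)
    (M : ModuleCat.{u} R) (hM : M ∈ 𝒯) (ε : ModuleCat.of R R ⟶ M)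
    (hpre : ∀ T' ∈ 𝒯, ∀ f : ModuleCat.of R R ⟶ T', ∃ g : M ⟶ T', ε ≫ g = f)
    (henv : ∀ α : M ⟶ M, ε ≫ α = ε → IsIso α)
    (T : ModuleCat.{u} R) (hT : T ∈ 𝒯)
    (P A : ModuleCat.{u} R) (i : A ⟶ P) (p : P ⟶ M)
    (hi : Function.Injective i) (hp : Function.Surjective p)
    (hx : ∀ y : P, p y = 0 ↔ y ∈ Set.range i)
    (f : A ⟶ T) : ∃ g : P ⟶ T, ∀ a, g (i a) = f a := by
  classical
  -- the pushout of `i` and `f`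
  let fl : (A : Type u) →ₗ[R] (T : Type u) := f.hom
  have hfl : ∀ a, fl a = f a := fun _ => rfl
  set w : A →ₗ[R] P × T := LinearMap.prod i.hom (-fl) with hw
  set W : Submodule R (↥P × ↥T) := LinearMap.range w with hW
  let E : ModuleCat.{u} R := ModuleCat.of R ((↥P × ↥T) ⧸ W)
  let ι : T ⟶ E := ModuleCat.ofHom (W.mkQ.comp (LinearMap.inr R P T))
  have hWle : W ≤ LinearMap.ker ((p.hom : P →ₗ[R] M).comp (LinearMap.fst R P T)) := by
    rintro z ⟨a, rfl⟩
    simp only [LinearMap.mem_ker, LinearMap.comp_apply, LinearMap.fst_apply, hw,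
      LinearMap.prod_apply, Pi.prod]
    exact (hx (i a)).2 ⟨a, rfl⟩
  let q : E ⟶ M := ModuleCat.ofHom (W.liftQ ((p.hom : P →ₗ[R] M).comp (LinearMap.fst R P T)) hWle)
  have hq_mk : ∀ z : ↥P × ↥T, q (W.mkQ z) = p z.1 := fun z => rfl
  have hι_mk : ∀ t : T, ι t = W.mkQ (0, t) := fun t => rfl
  have hι : Function.Injective ι := by
    rw [← LinearMap.ker_eq_bot (M := T) (M₂ := E), LinearMap.ker_eq_bot']
    intro t ht
    rw [hι_mk] at ht
    have hmem : ((0 : ↥P), t) ∈ W := (Submodule.Quotient.mk_eq_zero W).1 ht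
    obtain ⟨a, ha⟩ := hmem
    have ha1 : i a = 0 := congrArg Prod.fst ha
    have ha0 : a = 0 := hi (by simpa using ha1)
    have ha2 : -f a = t := congrArg Prod.snd ha
    rw [ha0] at ha2
    simpa using ha2.symm
  have hq : Function.Surjective q := by
    intro m
    obtain ⟨y, hy⟩ := hp m
    exact ⟨W.mkQ (y, 0), by rw [hq_mk]; exact hy⟩
  have hexact : Function.Exact ι q := by
    intro e
    obtain ⟨⟨y, t⟩, rfl⟩ := W.mkQ_surjective e
    constructor
    · intro h0
      rw [hq_mk] at h0
      obtain ⟨a, ha⟩ := (hx y).1 h0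
      refine ⟨t + f a, ?_⟩
      rw [hι_mk, Submodule.mkQ_apply, Submodule.mkQ_apply, Submodule.Quotient.eq]
      refine ⟨-a, ?_⟩
      simp only [hw, LinearMap.prod_apply, Pi.prod, map_neg, LinearMap.neg_apply, neg_neg, ha]
      ext
      · simp; exact ha
      · simp [LinearMap.neg_apply, hfl]
    · rintro ⟨t', ht'⟩
      rw [← ht', hι_mk, hq_mk]
      exact map_zero p.hom
  have hE : E ∈ 𝒯 := hext T E M ι q hT hM hι hq hexact
  -- lift `ε` through `q`
  obtain ⟨e, he⟩ := hq (ε (1 : R))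
  let η : ModuleCat.of R R ⟶ E := ModuleCat.ofHom (LinearMap.toSpanSingleton R E e)
  have hηq : η ≫ q = ε := by
    refine ModuleCat.hom_ext (LinearMap.ext_ring ?_)
    show q (η (1 : R)) = ε (1 : R)
    rw [show η (1 : R) = e from one_smul R e]
    exact he
  obtain ⟨g, hg⟩ := hpre E hE η
  have hiso : IsIso (g ≫ q) := henv _ (by rw [← Category.assoc, hg, hηq])
  let s : M ⟶ E := inv (g ≫ q) ≫ g
  have hs : ∀ m, q (s m) = m := by
    intro m
    have h1 : s ≫ q = 𝟙 M := by
      dsimp only [s]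
      rw [Category.assoc, IsIso.inv_hom_id]
    exact congrArg (fun φ : M ⟶ M => φ m) h1
  -- build the retraction and the extension
  let s' : (M : Type u) →ₗ[R] ((↥P × ↥T) ⧸ W) := s.hom
  let δ : (P : Type u) →ₗ[R] ((↥P × ↥T) ⧸ W) :=
    W.mkQ.comp (LinearMap.inl R P T) - s'.comp (p.hom : (P : Type u) →ₗ[R] M)
  have hδ : ∀ y : P, q (δ y) = 0 := by
    intro y
    have hδy : δ y = W.mkQ (y, 0) - s' (p y) := rfl
    rw [hδy, map_sub, hq_mk, show q (s' (p y)) = p y from hs (p y)]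
    simp
  have hδker : ∀ y : P, δ y ∈ LinearMap.ker (q.hom : (((↥P × ↥T) ⧸ W) : Type u) →ₗ[R] M) :=
    fun y => LinearMap.mem_ker.2 (hδ y)
  let ι' : (T : Type u) →ₗ[R] LinearMap.ker (q.hom : (((↥P × ↥T) ⧸ W) : Type u) →ₗ[R] M) :=
    LinearMap.codRestrict _ (ι.hom : (T : Type u) →ₗ[R] ((↥P × ↥T) ⧸ W))
      (fun t => LinearMap.mem_ker.2 ((hexact (ι t)).2 ⟨t, rfl⟩))
  have hι'bij : Function.Bijective ι' := by
    constructor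
    · intro a b h
      exact hι (congrArg Subtype.val h)
    · rintro ⟨y, hy⟩
      obtain ⟨t, ht⟩ := (hexact y).1 hy
      exact ⟨t, Subtype.ext ht⟩
  let eT := LinearEquiv.ofBijective ι' hι'bij
  let g' : P ⟶ T := ModuleCat.ofHom ((eT.symm.toLinearMap).comp
    (LinearMap.codRestrict _ δ hδker) : (P : Type u) →ₗ[R] (T : Type u))
  refine ⟨g', fun a => ?_⟩
  have hpa : p (i a) = 0 := (hx (i a)).2 ⟨a, rfl⟩
  have hδa : δ (i a) = ι (f a) := by
    have hδy : δ (i a) = W.mkQ (i a, 0) - s' (p (i a)) := rfl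
    rw [hδy, hpa, map_zero, sub_zero, hι_mk, Submodule.mkQ_apply, Submodule.mkQ_apply,
      Submodule.Quotient.eq]
    refine ⟨a, ?_⟩
    simp only [hw, LinearMap.prod_apply, Pi.prod, LinearMap.neg_apply]
    ext
    · simp
    · simp [LinearMap.neg_apply, hfl]
  have hcod : LinearMap.codRestrict _ δ hδker (i a) = ι' (f a) :=
    Subtype.ext hδa
  show eT.symm (LinearMap.codRestrict _ δ hδker (i a)) = f a
  rw [hcod]
  exact eT.symm_apply_apply (f a)

/-- If `𝒯` is a class of modules closed under extensions and `ε : R → M` is a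
`𝒯`-envelope of the regular module `R`, then `Ext¹(M, T) = 0` for all `T ∈ 𝒯`. -/
theorem envelope_ext_vanish {R : Type u} [Ring R] (𝒯 : Set (ModuleCat.{u} R))
    (hext : ∀ (A B C : ModuleCat.{u} R) (ι : A ⟶ B) (π : B ⟶ C),
      A ∈ 𝒯 → C ∈ 𝒯 → Function.Injective ι → Function.Surjective π →
      Function.Exact ι π → B ∈ 𝒯)
    (M : ModuleCat.{u} R) (hM : M ∈ 𝒯) (ε : ModuleCat.of R R ⟶ M)
    (hpre : ∀ T' ∈ 𝒯, ∀ f : ModuleCat.of R R ⟶ T', ∃ g : M ⟶ T', ε ≫ g = f)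
    (henv : ∀ α : M ⟶ M, ε ≫ α = ε → IsIso α) :
    ∀ T ∈ 𝒯, Subsingleton (((Ext ℤ (ModuleCat.{u} R) 1).obj (op M)).obj T) := by
  intro T hT
  let P : ProjectiveResolution M := (HasProjectiveResolution.out (Z := M)).some
  have hzero : IsZero ((P.complex.linearYonedaObj ℤ T).homology 1) := by
    rw [← HomologicalComplex.exactAt_iff_isZero_homology]
    rw [HomologicalComplex.exactAt_iff' _ 0 1 2 (by simp) (by simp)]
    rw [ShortComplex.moduleCat_exact_iff]
    intro x hx0
    let x' : P.complex.X 1 ⟶ T := x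
    have hx0' : P.complex.d 2 1 ≫ x' = 0 := hx0
    -- `x` kills the kernel of `d 1 0`
    have hexsucc := (ShortComplex.moduleCat_exact_iff _).1 (P.exact_succ 0)
    have hker : LinearMap.ker ((P.complex.d 1 0).hom :
        (P.complex.X 1 : Type u) →ₗ[R] (P.complex.X 0 : Type u)) ≤
        LinearMap.ker (x'.hom : (P.complex.X 1 : Type u) →ₗ[R] (T : Type u)) := by
      intro u hu
      obtain ⟨v, hv⟩ := hexsucc u (LinearMap.mem_ker.1 hu)
      have hv' : P.complex.d 2 1 v = u := hv
      have hxv : x' (P.complex.d 2 1 v) = 0 := congrArg (fun φ : P.complex.X 2 ⟶ T => φ v) hx0'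
      rw [hv'] at hxv
      exact LinearMap.mem_ker.2 hxv
    set d1 : (P.complex.X 1 : Type u) →ₗ[R] (P.complex.X 0 : Type u) := (P.complex.d 1 0).hom with hd1
    let A : ModuleCat.{u} R := ModuleCat.of R (LinearMap.range d1)
    let i : A ⟶ P.complex.X 0 := ModuleCat.ofHom (LinearMap.range d1).subtype
    let p : P.complex.X 0 ⟶ M := P.π.f 0
    have hi : Function.Injective i := Subtype.val_injective
    have hp : Function.Surjective p := (ModuleCat.epi_iff_surjective _).1 (inferInstanceAs (Epi (P.π.f 0)))
    have hex0 := (ShortComplex.moduleCat_exact_iff _).1 P.exact₀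
    have hx' : ∀ y : (P.complex.X 0 : Type u), p y = 0 ↔ y ∈ Set.range i := by
      intro y
      constructor
      · intro h0
        obtain ⟨u, hu⟩ := hex0 y h0
        exact ⟨⟨d1 u, ⟨u, rfl⟩⟩, hu⟩
      · rintro ⟨⟨z, u, rfl⟩, rfl⟩
        exact congrArg (fun φ : _ ⟶ M => φ u) P.complex_d_comp_π_f_zero
    let f : A ⟶ T := ModuleCat.ofHom (((LinearMap.ker d1).liftQ
      (x'.hom : (P.complex.X 1 : Type u) →ₗ[R] (T : Type u)) hker).comp
      (LinearMap.quotKerEquivRange d1).symm.toLinearMap)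
    obtain ⟨g, hg⟩ := envelope_extend_aux 𝒯 hext M hM ε hpre henv T hT
      (P.complex.X 0) A i p hi hp hx' f
    refine ⟨g, ?_⟩
    have hfin : P.complex.d 1 0 ≫ g = x' := by
      ext u
      have h1 : (P.complex.d 1 0 ≫ g) u = g (i ⟨d1 u, ⟨u, rfl⟩⟩) := rfl
      rw [h1, hg]
      show ((LinearMap.ker d1).liftQ (x'.hom : (P.complex.X 1 : Type u) →ₗ[R] (T : Type u)) hker)
        ((LinearMap.quotKerEquivRange d1).symm ⟨d1 u, ⟨u, rfl⟩⟩) = x' u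
      rw [LinearMap.quotKerEquivRange_symm_apply_image d1 u ⟨u, rfl⟩]
      rfl
    exact hfin
  have hIsZero : IsZero (((Ext ℤ (ModuleCat.{u} R) 1).obj (op M)).obj T) :=
    hzero.of_iso (P.isoExt 1 T)
  have h1 : (𝟙 (((Ext ℤ (ModuleCat.{u} R) 1).obj (op M)).obj T)) = 0 :=
    hIsZero.eq_of_src _ _
  refine ⟨fun a b => ?_⟩
  calc a = (𝟙 (((Ext ℤ (ModuleCat.{u} R) 1).obj (op M)).obj T)) a := rfl
    _ = (0 : ((Ext ℤ (ModuleCat.{u} R) 1).obj (op M)).obj T ⟶ _) a := by rw [h1]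
    _ = (𝟙 (((Ext ℤ (ModuleCat.{u} R) 1).obj (op M)).obj T)) b := by rw [h1]; rfl
    _ = b := rfl
end

section
/- Let ℱ be a class of R-modules, E an injective R-module, and ε : M → E an ℱ-cover of E. Then every monomorphism α : M → N with N ∈ ℱ splits, i.e. there exists β : N → M with β ∘ α = id_M. -/
open CategoryTheory

universe u

/-- If `ε : M → E` is an `ℱ`-cover of an injective module `E`, then every monomorphism
`α : M → N` with `N ∈ ℱ` splits. -/
theorem cover_mono_splits {R : Type u} [Ring R] (ℱ : Set (ModuleCat.{u} R))
    (E : ModuleCat.{u} R) (hE : Injective E)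
    (M : ModuleCat.{u} R) (hM : M ∈ ℱ) (ε : M ⟶ E)
    (hpre : ∀ F' ∈ ℱ, ∀ f : F' ⟶ E, ∃ g : F' ⟶ M, g ≫ ε = f)
    (hcov : ∀ α : M ⟶ M, α ≫ ε = ε → IsIso α)
    (N : ModuleCat.{u} R) (hN : N ∈ ℱ) (α : M ⟶ N) (hα : Function.Injective α) :
    ∃ β : N ⟶ M, α ≫ β = 𝟙 M := by
  haveI : Mono α := (ModuleCat.mono_iff_injective α).mpr hα
  let φ : N ⟶ E := Injective.factorThru ε α
  have hφ : α ≫ φ = ε := Injective.comp_factorThru ε α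
  obtain ⟨g, hg⟩ := hpre N hN φ
  have h : (α ≫ g) ≫ ε = ε := by rw [Category.assoc, hg, hφ]
  haveI := hcov (α ≫ g) h
  exact ⟨g ≫ inv (α ≫ g), by rw [← Category.assoc, IsIso.hom_inv_id]⟩
end

section
/- Let ℱ be a class of R-modules closed under extensions, E an injective R-module, and ε : M → E an ℱ-cover of E. Then Ext¹_R(F, M) = 0 for every F ∈ ℱ. -/
open CategoryTheory CategoryTheory.Limits Opposite

universe u

/-- Pushout/extension lemma: given an `ℱ`-cover `ε : M → E` with `E` injective,
`F ∈ ℱ`, and a surjection `π₀ : P₀ → F` with kernel `K`, every linear map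
`K → M` extends to `P₀ → M`. -/
theorem extend_of_cover {R : Type u} [Ring R] (ℱ : Set (ModuleCat.{u} R))
    (hext : ∀ (A B C : ModuleCat.{u} R) (ι : A ⟶ B) (π : B ⟶ C),
      A ∈ ℱ → C ∈ ℱ → Function.Injective ι → Function.Surjective π →
      Function.Exact ι π → B ∈ ℱ)
    (E : ModuleCat.{u} R) (hE : Injective E)
    (M : ModuleCat.{u} R) (hM : M ∈ ℱ) (ε : M ⟶ E)
    (hpre : ∀ F' ∈ ℱ, ∀ f : F' ⟶ E, ∃ g : F' ⟶ M, g ≫ ε = f)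
    (hcov : ∀ α : M ⟶ M, α ≫ ε = ε → IsIso α)
    (F : ModuleCat.{u} R) (hF : F ∈ ℱ)
    (P₀ : ModuleCat.{u} R) (π₀ : P₀ ⟶ F) (hπ : Function.Surjective π₀)
    (K : Submodule R P₀) (hK : K = LinearMap.ker π₀.hom)
    (fb : K →ₗ[R] M) :
    ∃ g : P₀ →ₗ[R] M, ∀ k : K, g (k : P₀) = fb k := by
  classical
  set h : K →ₗ[R] (↑P₀ × ↑M) := K.subtype.prod (-fb) with hh
  set W : Submodule R (↑P₀ × ↑M) := LinearMap.range h with hW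
  set X : ModuleCat.{u} R := ModuleCat.of R ((↑P₀ × ↑M) ⧸ W) with hX
  set inM : M ⟶ X := ModuleCat.ofHom (W.mkQ.comp (LinearMap.inr R P₀ M) : (M : Type u) →ₗ[R] ((↑P₀ × ↑M) ⧸ W)) with hinM
  have hle : W ≤ LinearMap.ker ((π₀.hom : (P₀ : Type u) →ₗ[R] F).comp (LinearMap.fst R P₀ M)) := by
    rintro _ ⟨k, rfl⟩
    simp only [LinearMap.mem_ker, LinearMap.comp_apply, LinearMap.fst_apply,
      LinearMap.prod_apply, hh, Pi.prod, Submodule.coe_subtype]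
    have : (k : P₀) ∈ LinearMap.ker π₀.hom := hK ▸ k.2
    exact this
  set πX : X ⟶ F := ModuleCat.ofHom (W.liftQ ((π₀.hom : (P₀ : Type u) →ₗ[R] F).comp (LinearMap.fst R P₀ M)) hle :
    ((↑P₀ × ↑M) ⧸ W) →ₗ[R] F) with hπX
  have πX_mk : ∀ p m, πX (Submodule.Quotient.mk (p, m)) = π₀ p := fun p m => rfl
  have inM_mk : ∀ m : M, inM m = Submodule.Quotient.mk ((0 : P₀), m) := fun m => rfl
  -- injectivity of inM
  have hinj : Function.Injective inM := by
    rw [injective_iff_map_eq_zero]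
    intro m hm
    rw [inM_mk, Submodule.Quotient.mk_eq_zero] at hm
    obtain ⟨k, hk⟩ := hm
    have hk1 : (k : P₀) = 0 := congrArg Prod.fst hk
    have hk0 : k = 0 := Subtype.ext hk1
    have hk2 : -fb k = m := congrArg Prod.snd hk
    rw [hk0] at hk2
    simpa using hk2.symm
  -- surjectivity of πX
  have hsurj : Function.Surjective πX := by
    intro y
    obtain ⟨p, hp⟩ := hπ y
    exact ⟨Submodule.Quotient.mk (p, 0), by rw [πX_mk]; exact hp⟩
  -- exactness
  have hexact : Function.Exact inM πX := by
    intro x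
    obtain ⟨⟨p, m⟩, rfl⟩ := Submodule.Quotient.mk_surjective W x
    constructor
    · intro h0
      rw [πX_mk] at h0
      have hp : p ∈ K := hK ▸ h0
      refine ⟨m + fb ⟨p, hp⟩, ?_⟩
      rw [inM_mk, Submodule.Quotient.eq]
      refine ⟨-⟨p, hp⟩, ?_⟩
      rw [map_neg, Prod.ext_iff]
      constructor
      · simp [hh, Pi.prod]
      · simp only [hh, LinearMap.prod_apply, Pi.prod, Function.prod_apply, LinearMap.neg_apply, Prod.snd_neg,
          Prod.snd_sub, neg_neg]
        abel
    · rintro ⟨m', hm'⟩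
      rw [← hm', inM_mk, πX_mk]
      simp
  have hXF : X ∈ ℱ := hext M X F inM πX hM hF hinj hsurj hexact
  -- extend ε ∘ fb along K ↪ P₀ using injectivity of E
  set ιm : ModuleCat.of R K ⟶ P₀ := ModuleCat.ofHom (K.subtype : (K : Type u) →ₗ[R] P₀) with hιm
  set fbm : ModuleCat.of R K ⟶ M := ModuleCat.ofHom fb with hfbm
  obtain ⟨t, htfac⟩ : ∃ t : P₀ ⟶ E, ιm ≫ t = fbm ≫ ε := by
    have : Mono ιm := (ModuleCat.mono_iff_injective ιm).2 (fun a b hab => Subtype.ext hab)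
    exact ⟨Injective.factorThru _ _, Injective.comp_factorThru _ _⟩
  have htk : ∀ k : K, t (k : P₀) = ε (fb k) := by
    intro k
    have := ConcreteCategory.congr_hom htfac k
    simpa [hιm, hfbm] using this
  -- φ : X ⟶ E
  have hle2 : W ≤ LinearMap.ker
      ((t.hom : (P₀ : Type u) →ₗ[R] E).comp (LinearMap.fst R P₀ M)
        + (ε.hom : (M : Type u) →ₗ[R] E).comp (LinearMap.snd R P₀ M)) := by
    rintro _ ⟨k, rfl⟩
    simp only [LinearMap.mem_ker, LinearMap.add_apply, LinearMap.comp_apply,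
      LinearMap.fst_apply, LinearMap.snd_apply, LinearMap.prod_apply, hh, Pi.prod,
      Submodule.coe_subtype, LinearMap.neg_apply]
    show t (k : P₀) + ε (-(fb k)) = 0
    rw [htk k]
    simp
  set φ : X ⟶ E := ModuleCat.ofHom (W.liftQ _ hle2 : ((↑P₀ × ↑M) ⧸ W) →ₗ[R] E) with hφ
  have φ_mk : ∀ p m, φ (Submodule.Quotient.mk (p, m)) = t p + ε m := fun p m => rfl
  obtain ⟨g, hg⟩ := hpre X hXF φ
  set α : M ⟶ M := inM ≫ g with hα
  have hαε : α ≫ ε = ε := by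
    ext m
    have : ε (g (inM m)) = φ (inM m) := by simpa using ConcreteCategory.congr_hom hg (inM m)
    calc ε (g (inM m)) = φ (inM m) := this
      _ = ε m := by rw [inM_mk, φ_mk]; simp
  have : IsIso α := hcov α hαε
  set r : X ⟶ M := g ≫ inv α with hr
  have hrinM : inM ≫ r = 𝟙 M := by
    rw [hr, ← Category.assoc, ← hα, IsIso.hom_inv_id]
  refine ⟨(r.hom : (X : Type u) →ₗ[R] M).comp (W.mkQ.comp (LinearMap.inl R P₀ M)), ?_⟩
  intro k
  show r ((Submodule.Quotient.mk ((k : P₀), (0 : M))) : (↑P₀ × ↑M) ⧸ W) = fb k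
  have hmk : (Submodule.Quotient.mk ((k : P₀), (0 : M)) : (↑P₀ × ↑M) ⧸ W) = inM (fb k) := by
    rw [inM_mk, Submodule.Quotient.eq]
    refine ⟨k, ?_⟩
    rw [Prod.ext_iff]
    constructor
    · show (k : P₀) = ((k : P₀), (0 : M)).1 - ((0 : P₀), fb k).1
      simp
    · show -(fb k) = ((k : P₀), (0 : M)).2 - ((0 : P₀), fb k).2
      simp
  rw [hmk]
  have := ConcreteCategory.congr_hom hrinM (fb k)
  simpa using this

/-- If `ℱ` is a class of modules closed under extensions and `ε : M → E` is an
`ℱ`-cover of an injective module `E`, then `Ext¹(F, M) = 0` for all `F ∈ ℱ`. -/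
theorem cover_ext_vanish {R : Type u} [Ring R] (ℱ : Set (ModuleCat.{u} R))
    (hext : ∀ (A B C : ModuleCat.{u} R) (ι : A ⟶ B) (π : B ⟶ C),
      A ∈ ℱ → C ∈ ℱ → Function.Injective ι → Function.Surjective π →
      Function.Exact ι π → B ∈ ℱ)
    (E : ModuleCat.{u} R) (hE : Injective E)
    (M : ModuleCat.{u} R) (hM : M ∈ ℱ) (ε : M ⟶ E)
    (hpre : ∀ F' ∈ ℱ, ∀ f : F' ⟶ E, ∃ g : F' ⟶ M, g ≫ ε = f)
    (hcov : ∀ α : M ⟶ M, α ≫ ε = ε → IsIso α) :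
    ∀ F ∈ ℱ, Subsingleton (((Ext ℤ (ModuleCat.{u} R) 1).obj (op F)).obj M) := by
  intro F hF
  obtain ⟨P⟩ : Nonempty (ProjectiveResolution F) := HasProjectiveResolution.out
  set C := P.complex.linearYonedaObj ℤ M with hCdef
  set d10 : P.complex.X 1 ⟶ P.complex.X 0 := P.complex.d 1 0 with hd10
  set π₀ : P.complex.X 0 ⟶ F := (P.π.f 0 : P.complex.X 0 ⟶ _) with hπ₀
  set K : Submodule R (P.complex.X 0) := LinearMap.ker π₀.hom with hKdef
  have hπ₀surj : Function.Surjective π₀ := by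
    rw [← ModuleCat.epi_iff_surjective]
    exact (inferInstance : Epi (P.π.f 0))
  have hrange : LinearMap.range d10.hom = K := by
    have := P.exact₀.moduleCat_range_eq_ker
    exact this
  -- exactness of `C` at 1
  have hex : C.ExactAt 1 := by
    rw [HomologicalComplex.exactAt_iff' C 0 1 2 (by simp) (by simp)]
    rw [ShortComplex.moduleCat_exact_iff]
    show ∀ (f : P.complex.X 1 ⟶ M), (P.complex.d 2 1 ≫ f : P.complex.X 2 ⟶ M) = 0 →
      ∃ g : P.complex.X 0 ⟶ M, (d10 ≫ g : P.complex.X 1 ⟶ M) = f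
    intro f hf'
    have hker : LinearMap.ker d10.hom ≤ LinearMap.ker f.hom := by
      intro x hx
      have hx' : x ∈ LinearMap.range (P.complex.d 2 1).hom := by
        rw [(P.exact_succ 0).moduleCat_range_eq_ker]
        exact hx
      obtain ⟨z, hz⟩ := hx'
      have hz2 : f (P.complex.d 2 1 z) = 0 := by
        have := ConcreteCategory.congr_hom hf' z
        simpa using this
      rw [LinearMap.mem_ker, ← hz]
      exact hz2
    set q := LinearMap.quotKerEquivRange d10.hom with hq
    set fb : K →ₗ[R] M :=
      (((LinearMap.ker d10.hom).liftQ f.hom hker).comp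
        q.symm.toLinearMap).comp
        (LinearEquiv.ofEq K (LinearMap.range d10.hom) hrange.symm).toLinearMap with hfbdef
    have hfb : ∀ (y : P.complex.X 1) (hy : d10 y ∈ K), fb ⟨d10 y, hy⟩ = f y := by
      intro y hy
      have h2 : q.symm ⟨d10 y, ⟨y, rfl⟩⟩ = Submodule.Quotient.mk y := by
        rw [LinearEquiv.symm_apply_eq]
        exact Subtype.ext rfl
      show ((LinearMap.ker d10.hom).liftQ f.hom hker)
        (q.symm ((LinearEquiv.ofEq K (LinearMap.range d10.hom) hrange.symm) ⟨d10 y, hy⟩)) = _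
      have h1 : (LinearEquiv.ofEq K (LinearMap.range d10.hom) hrange.symm) ⟨d10 y, hy⟩
          = ⟨d10 y, ⟨y, rfl⟩⟩ := rfl
      rw [h1, h2]
      exact Submodule.liftQ_apply _ _ _
    obtain ⟨g, hg⟩ := extend_of_cover ℱ hext E hE M hM ε hpre hcov F hF
      (P.complex.X 0) π₀ hπ₀surj K hKdef fb
    refine ⟨ModuleCat.ofHom g, ?_⟩
    ext y
    have hy : d10 y ∈ K := hrange ▸ ⟨y, rfl⟩
    calc g (d10 y) = fb ⟨d10 y, hy⟩ := hg ⟨d10 y, hy⟩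
      _ = f y := hfb y hy
  have hz : IsZero (C.homology 1) := by
    rw [← HomologicalComplex.exactAt_iff_isZero_homology]
    exact hex
  have e := P.isoExt (R := ℤ) 1 M
  have hz2 : IsZero (((Ext ℤ (ModuleCat.{u} R) 1).obj (op F)).obj M) := hz.of_iso e
  have hid : 𝟙 (((Ext ℤ (ModuleCat.{u} R) 1).obj (op F)).obj M) = 0 := hz2.eq_of_src _ _
  refine ⟨fun a b => ?_⟩
  have ha : a = 0 := by
    have := ConcreteCategory.congr_hom hid a
    simpa using this
  have hb : b = 0 := by
    have := ConcreteCategory.congr_hom hid b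
    simpa using this
  rw [ha, hb]
end

section
/- Consider a commutative diagram of R-modules with exact rows 0 → V →^ι L₋₁ →^ρ L₀ → T₁ → 0 and 0 → U →^υ X →^ξ T₀ → T₁ → 0, with vertical maps α : V → U, δ : L₋₁ → X, a map L₀ → T₀, and the identity on T₁. If the middle square (formed by ρ, δ, and the maps L₀ → T₀, ξ) is a pushout square, then α is an epimorphism. -/
open CategoryTheory

universe u

/-- Given a commutative diagram of modules with exact rows
`0 → V → L₋₁ → L₀ → T₁ → 0` and `0 → U → X → T₀ → T₁ → 0`
(vertical maps `α : V → U`, `δ : L₋₁ → X`, `γ : L₀ → T₀`, identity on `T₁`),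
if the middle square is a pushout then `α` is an epimorphism. -/
theorem pushout_middle_square_imp_epi {R : Type u} [Ring R]
    {V L₁ L₀ T₁ U X T₀ : ModuleCat.{u} R}
    (ι : V ⟶ L₁) (ρ : L₁ ⟶ L₀) (π₁ : L₀ ⟶ T₁)
    (υ : U ⟶ X) (ξ : X ⟶ T₀) (π₂ : T₀ ⟶ T₁)
    (α : V ⟶ U) (δ : L₁ ⟶ X) (γ : L₀ ⟶ T₀)
    (hι : Function.Injective ι) (hιρ : Function.Exact ι ρ)
    (hρπ : Function.Exact ρ π₁) (hπ₁ : Function.Surjective π₁)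
    (hυ : Function.Injective υ) (hυξ : Function.Exact υ ξ)
    (hξπ : Function.Exact ξ π₂) (hπ₂ : Function.Surjective π₂)
    (hsq₁ : ι ≫ δ = α ≫ υ) (hsq₂ : ρ ≫ γ = δ ≫ ξ) (hsq₃ : γ ≫ π₂ = π₁)
    (hpo : IsPushout ρ δ γ ξ) :
    Function.Surjective α := by
  -- the linear map L₁ → L₀ × X, l ↦ (ρ l, -δ l)
  let θ : L₁ →ₗ[R] (L₀ × X) := LinearMap.prod ρ.hom (-δ.hom)
  let M : Submodule R (L₀ × X) := LinearMap.range θ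
  let P : ModuleCat.{u} R := ModuleCat.of R ((L₀ × X) ⧸ M)
  let q : (L₀ × X) →ₗ[R] ((L₀ × X) ⧸ M) := M.mkQ
  let g₁ : L₀ ⟶ P := ModuleCat.ofHom (q.comp (LinearMap.inl R L₀ X))
  let g₂ : X ⟶ P := ModuleCat.ofHom (q.comp (LinearMap.inr R L₀ X))
  have w : ρ ≫ g₁ = δ ≫ g₂ := by
    ext l
    show q (ρ l, 0) = q (0, δ l)
    rw [← sub_eq_zero, ← map_sub]
    simp only [q]
    rw [Submodule.mkQ_apply, Submodule.Quotient.mk_eq_zero]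
    exact ⟨l, by simp [θ, Prod.ext_iff]⟩
  intro u
  -- map the pushout into P and evaluate at ξ (υ u) = 0
  have h0 : ξ (υ u) = 0 := (hυξ (υ u)).mpr ⟨u, rfl⟩
  have hdesc : ξ ≫ hpo.desc g₁ g₂ w = g₂ := hpo.inr_desc g₁ g₂ w
  have hmem : ((0 : L₀), υ u) ∈ M := by
    rw [← Submodule.Quotient.mk_eq_zero M]
    have h2 : (ξ ≫ hpo.desc g₁ g₂ w) (υ u) = g₂ (υ u) := by rw [hdesc]
    rw [show (ξ ≫ hpo.desc g₁ g₂ w) (υ u) = hpo.desc g₁ g₂ w (ξ (υ u)) from rfl,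
      h0, map_zero] at h2
    exact h2.symm
  obtain ⟨l, hl⟩ := hmem
  have hρl : ρ l = 0 := congrArg Prod.fst hl
  have hδl : -(δ l) = υ u := congrArg Prod.snd hl
  obtain ⟨v, hv⟩ := (hιρ l).mp hρl
  refine ⟨-v, hυ ?_⟩
  have h1 : δ (ι v) = υ (α v) := congrArg (fun f => f.hom v) hsq₁
  rw [map_neg, map_neg, h1.symm, hv, hδl]
end

section
/- Consider a commutative diagram of R-modules with exact rows 0 → V →^ι L₋₁ →^ρ L₀ → T₁ → 0 and 0 → U →^υ X →^ξ T₀ → T₁ → 0, with vertical maps α : V → U, δ : L₋₁ → X, γ : L₀ → T₀, and the identity on T₁. If α is an epimorphism, then the middle square (with maps ρ, δ, γ, ξ) is a pushout square. -/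
open CategoryTheory

universe u

open CategoryTheory.Limits in
/-- Given a commutative diagram of modules with exact rows
`0 → V → L₋₁ → L₀ → T₁ → 0` and `0 → U → X → T₀ → T₁ → 0`
(vertical maps `α : V → U`, `δ : L₋₁ → X`, `γ : L₀ → T₀`, identity on `T₁`),
if `α` is an epimorphism then the middle square is a pushout. -/
theorem epi_imp_pushout_middle_square {R : Type u} [Ring R]
    {V L₁ L₀ T₁ U X T₀ : ModuleCat.{u} R}
    (ι : V ⟶ L₁) (ρ : L₁ ⟶ L₀) (π₁ : L₀ ⟶ T₁)
    (υ : U ⟶ X) (ξ : X ⟶ T₀) (π₂ : T₀ ⟶ T₁)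
    (α : V ⟶ U) (δ : L₁ ⟶ X) (γ : L₀ ⟶ T₀)
    (hι : Function.Injective ι) (hιρ : Function.Exact ι ρ)
    (hρπ : Function.Exact ρ π₁) (hπ₁ : Function.Surjective π₁)
    (hυ : Function.Injective υ) (hυξ : Function.Exact υ ξ)
    (hξπ : Function.Exact ξ π₂) (hπ₂ : Function.Surjective π₂)
    (hsq₁ : ι ≫ δ = α ≫ υ) (hsq₂ : ρ ≫ γ = δ ≫ ξ) (hsq₃ : γ ≫ π₂ = π₁)
    (hα : Function.Surjective α) :
    IsPushout ρ δ γ ξ := by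
  have sq : CommSq ρ δ γ ξ := ⟨hsq₂⟩
  -- the short complex L₁ → L₀ ⊞ X → T₀
  let S : ShortComplex (ModuleCat.{u} R) :=
    { X₁ := L₁
      X₂ := L₀ ⊞ X
      X₃ := T₀
      f := biprod.lift ρ (-δ)
      g := biprod.desc γ ξ
      zero := by
        rw [biprod.lift_desc, Preadditive.neg_comp, hsq₂]
        simp }
  -- elementwise helper lemmas about the biproduct
  have hfst : ∀ a : ↑L₁, (biprod.fst : L₀ ⊞ X ⟶ L₀) ((biprod.lift ρ (-δ)) a) = ρ a := fun a => ConcreteCategory.congr_hom (biprod.lift_fst ρ (-δ)) a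
  have hsnd : ∀ a : ↑L₁, (biprod.snd : L₀ ⊞ X ⟶ X) ((biprod.lift ρ (-δ)) a) = -(δ a) := fun a => ConcreteCategory.congr_hom (biprod.lift_snd ρ (-δ)) a
  have hdinl : ∀ l : ↑L₀, (biprod.desc γ ξ) ((biprod.inl : L₀ ⟶ L₀ ⊞ X) l) = γ l := fun l => ConcreteCategory.congr_hom (biprod.inl_desc γ ξ) l
  have hdinr : ∀ x : ↑X, (biprod.desc γ ξ) ((biprod.inr : X ⟶ L₀ ⊞ X) x) = ξ x := fun x => ConcreteCategory.congr_hom (biprod.inr_desc γ ξ) x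
  have htot : ∀ b : ↑(L₀ ⊞ X),
      (biprod.inl : L₀ ⟶ L₀ ⊞ X) ((biprod.fst : L₀ ⊞ X ⟶ L₀) b) +
        (biprod.inr : X ⟶ L₀ ⊞ X) ((biprod.snd : L₀ ⊞ X ⟶ X) b) = b := fun b => ConcreteCategory.congr_hom (biprod.total (X := L₀) (Y := X)) b
  -- commutativity, elementwise
  have hsq₂' : ∀ a : ↑L₁, γ (ρ a) = ξ (δ a) := fun a => ConcreteCategory.congr_hom hsq₂ a
  have hsq₁' : ∀ v : ↑V, δ (ι v) = υ (α v) := fun v => ConcreteCategory.congr_hom hsq₁ v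
  have hsq₃' : ∀ l : ↑L₀, π₂ (γ l) = π₁ l := fun l => ConcreteCategory.congr_hom hsq₃ l
  -- `S.g` is an epimorphism
  have hepi : Epi S.g := by
    rw [ModuleCat.epi_iff_surjective]
    intro t
    obtain ⟨l, hl⟩ := hπ₁ (π₂ t)
    have h0 : π₂ (t - γ l) = 0 := by rw [map_sub, hsq₃' l, hl, sub_self]
    obtain ⟨x, hx⟩ := (hξπ (t - γ l)).mp h0
    refine ⟨(biprod.inl : L₀ ⟶ L₀ ⊞ X) l + (biprod.inr : X ⟶ L₀ ⊞ X) x, ?_⟩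
    show (biprod.desc γ ξ) _ = t
    rw [map_add, hdinl, hdinr, hx]
    abel
  -- `S` is exact
  have hex : S.Exact := by
    rw [ShortComplex.moduleCat_exact_iff]
    intro b hb
    have hb' : γ ((biprod.fst : L₀ ⊞ X ⟶ L₀) b) + ξ ((biprod.snd : L₀ ⊞ X ⟶ X) b) = 0 := by
      have : (biprod.desc γ ξ)
          ((biprod.inl : L₀ ⟶ L₀ ⊞ X) ((biprod.fst : L₀ ⊞ X ⟶ L₀) b) +
            (biprod.inr : X ⟶ L₀ ⊞ X) ((biprod.snd : L₀ ⊞ X ⟶ X) b)) = 0 := by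
        rw [htot b]; exact hb
      rwa [map_add, hdinl, hdinr] at this
    set l := (biprod.fst : L₀ ⊞ X ⟶ L₀) b with hldef
    set x := (biprod.snd : L₀ ⊞ X ⟶ X) b with hxdef
    -- π₁ l = 0, hence l = ρ m
    have hπl : π₁ l = 0 := by
      have hξ0 : π₂ (ξ x) = 0 := (hξπ (ξ x)).mpr ⟨x, rfl⟩
      have : γ l = -(ξ x) := by linear_combination (norm := module) hb'
      rw [← hsq₃' l, this, map_neg, hξ0, neg_zero]
    obtain ⟨m, hm⟩ := (hρπ l).mp hπl
    -- x + δ m ∈ ker ξ = im υ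
    have hker : ξ (x + δ m) = 0 := by
      rw [map_add, ← hsq₂' m, hm]
      linear_combination (norm := module) hb'
    obtain ⟨u, hu⟩ := (hυξ (x + δ m)).mp hker
    obtain ⟨v, hv⟩ := hα u
    refine ⟨m - ι v, ?_⟩
    have hρa : ρ (m - ι v) = l := by
      have h0 : ρ (ι v) = 0 := (hιρ (ι v)).mpr ⟨v, rfl⟩
      rw [map_sub, hm, h0, sub_zero]
    have hδa : δ (m - ι v) = -x := by
      rw [map_sub, hsq₁' v, hv, hu]
      abel
    have := htot ((biprod.lift ρ (-δ)) (m - ι v))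
    rw [hfst, hsnd, hρa, hδa, neg_neg] at this
    rw [show (biprod.lift ρ (-δ)) (m - ι v) = _ from this.symm, htot b]
  exact IsPushout.of_isColimit
    ((sq.isColimitEquivIsColimitCokernelCofork).symm hex.gIsCokernel)
end

section
/- Let R be a semiperfect ring whose Jacobson radical J is idempotent (J² = J). Then every extension of a semisimple right R-module by a semisimple right R-module is semisimple; consequently the class of semisimple right R-modules is closed under extensions. -/
universe u

section Aux

/-- The Jacobson radical annihilates every simple module. -/
lemma jac_smul_simple_eq_zero {R : Type*} [Ring R] {S : Type*} [AddCommGroup S] [Module R S]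
    [IsSimpleModule R S] {r : R} (hr : r ∈ Ideal.jacobson (⊥ : Ideal R)) (x : S) :
    r • x = 0 := by
  by_contra h
  obtain ⟨t, ht⟩ := IsSimpleModule.toSpanSingleton_surjective R h x
  have h1 : (t * r) • x = x := by rw [mul_smul]; exact ht
  have htr : t * r ∈ Ideal.jacobson (⊥ : Ideal R) := Ideal.mul_mem_left _ t hr
  obtain ⟨z, hz⟩ := Ideal.mem_jacobson_iff.mp htr (-1)
  rw [Ideal.mem_bot] at hz
  have hz1 : z * (1 - t * r) = 1 := by
    have : z * (1 - t * r) = z * (-1) * (t * r) + z := by noncomm_ring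
    rw [this, ← sub_eq_zero]
    simpa [sub_sub] using hz
  have hx0 : (1 - t * r) • x = 0 := by rw [sub_smul, one_smul, h1, sub_self]
  have hx : x = 0 := by
    calc x = (z * (1 - t * r)) • x := by rw [hz1, one_smul]
    _ = z • ((1 - t * r) • x) := mul_smul _ _ _
    _ = 0 := by rw [hx0, smul_zero]
  exact h (by rw [hx, smul_zero])

/-- The Jacobson radical annihilates every semisimple module. -/
lemma jac_smul_semisimple_eq_zero {R : Type*} [Ring R] {M : Type*} [AddCommGroup M] [Module R M]
    (h : IsSemisimpleModule R M) {r : R} (hr : r ∈ Ideal.jacobson (⊥ : Ideal R)) (m : M) :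
    r • m = 0 := by
  haveI := h
  have htop := IsSemisimpleModule.sSup_simples_eq_top R M
  rw [sSup_eq_iSup'] at htop
  have hm : m ∈ (⊤ : Submodule R M) := trivial
  rw [← htop] at hm
  refine Submodule.iSup_induction _ (motive := fun z => r • z = 0) hm ?_ (smul_zero r) ?_
  · rintro ⟨S, hS⟩ x hx
    haveI : IsSimpleModule R S := hS
    have h2 : r • (⟨x, hx⟩ : S) = 0 := jac_smul_simple_eq_zero hr _
    simpa using congrArg Subtype.val h2
  · intro x y hx hy
    rw [smul_add, hx, hy, add_zero]

/-- A module annihilated by an ideal `I` such that `R ⧸ I` is a semisimple `R`-module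
is itself semisimple: it is a quotient of a direct sum of copies of `R ⧸ I`. -/
lemma isSemisimpleModule_of_annihilated {R : Type*} [Ring R] {I : Ideal R}
    (hQ : IsSemisimpleModule R (R ⧸ I)) {B : Type*} [AddCommGroup B] [Module R B]
    (key : ∀ r ∈ I, ∀ b : B, r • b = 0) : IsSemisimpleModule R B := by
  haveI := hQ
  -- the free-ish module over `R ⧸ I` on `B` is semisimple
  haveI hF : IsSemisimpleModule R (B →₀ (R ⧸ I)) :=
    isSemisimpleModule_of_isSemisimpleModule_submodule'
      (fun _ ↦ .congr (LinearMap.quotKerEquivRange _).symm) Finsupp.iSup_lsingle_range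
  -- the natural surjection onto `B`
  have hker : ∀ b : B, (I : Submodule R R) ≤ LinearMap.ker (LinearMap.toSpanSingleton R B b) :=
    fun b r hr => by simpa using key r hr b
  let φ : B → ((R ⧸ I) →ₗ[R] B) := fun b =>
    Submodule.liftQ (I : Submodule R R) (LinearMap.toSpanSingleton R B b) (hker b)
  let f : (B →₀ (R ⧸ I)) →ₗ[R] B := Finsupp.lsum ℕ φ
  have hf : Function.Surjective f := by
    intro b
    refine ⟨Finsupp.single b (Submodule.Quotient.mk 1), ?_⟩
    simp only [f, Finsupp.lsum_single]
    show (φ b) (Submodule.Quotient.mk 1) = b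
    simp [φ, Submodule.liftQ_apply]
  exact .congr (LinearMap.quotKerEquivOfSurjective f hf).symm

end Aux

/-- Let `R` be a semiperfect ring (i.e. `R/J` is semisimple and idempotents lift
modulo `J`, where `J` is the Jacobson radical) whose Jacobson radical is idempotent
(`J² = J`).  Then every extension of a semisimple module by a semisimple module is
semisimple; in particular the class of semisimple `R`-modules is closed under
extensions. -/
theorem semisimple_closed_under_extensions_of_semiperfect_idem_jacobson
    {R : Type u} [Ring R]
    (hss : IsSemisimpleModule R (R ⧸ (Ideal.jacobson (⊥ : Ideal R))))
    (hlift : ∀ x : R, x * x - x ∈ Ideal.jacobson (⊥ : Ideal R) →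
      ∃ e : R, e * e = e ∧ e - x ∈ Ideal.jacobson (⊥ : Ideal R))
    (hidem : (Ideal.jacobson (⊥ : Ideal R)) •
        ((Ideal.jacobson (⊥ : Ideal R)) : Submodule R R) =
      ((Ideal.jacobson (⊥ : Ideal R)) : Submodule R R)) :
    ∀ (A B C : Type u) [AddCommGroup A] [Module R A] [AddCommGroup B] [Module R B]
      [AddCommGroup C] [Module R C] (ι : A →ₗ[R] B) (π : B →ₗ[R] C),
      Function.Injective ι → Function.Surjective π → Function.Exact ι π →
      IsSemisimpleModule R A → IsSemisimpleModule R C → IsSemisimpleModule R B := by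
  intro A B C _ _ _ _ _ _ ι π hinj hsurj hexact hA hC
  -- the Jacobson radical annihilates B, since J = J•J, J•B lands in ι(A), and J kills A and C
  have key : ∀ r ∈ Ideal.jacobson (⊥ : Ideal R), ∀ b : B, r • b = 0 := by
    intro r hr
    rw [← hidem] at hr
    refine Submodule.smul_induction_on hr (fun s hs n hn => fun b => ?_)
      (fun x y hx hy b => by rw [add_smul, hx, hy, add_zero])
    have h1 : π (n • b) = 0 := by rw [map_smul]; exact jac_smul_semisimple_eq_zero hC hn _
    obtain ⟨a, ha⟩ := (hexact (n • b)).mp h1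
    calc (s • n) • b = s • (n • b) := smul_assoc s n b
      _ = s • ι a := by rw [ha]
      _ = ι (s • a) := (map_smul ι s a).symm
      _ = ι 0 := by rw [jac_smul_semisimple_eq_zero hA hs]
      _ = 0 := map_zero ι
  exact isSemisimpleModule_of_annihilated hss key
end

section
/- Let R be a ring, 𝒯 a class of R-modules, X an R-module, and ε : X → T₀ a homomorphism with T₀ ∈ 𝒯 arising as a pushout: there is a commutative diagram with exact rows L₋₁ →^ρ L₀ → T₁ → 0 and X →^ε T₀ → T₁ → 0 where the left square is a pushout, and ρ is a homomorphism between projective modules such that Hom(ρ, T) is surjective for all T ∈ 𝒯. Then ε is a 𝒯-preenvelope of X. -/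
open CategoryTheory

universe u

/-- If `ε : X → T₀` (with `T₀ ∈ 𝒯`) arises as a pushout of a map `ρ : L₋₁ → L₀`
between projective modules such that `Hom(ρ, T)` is surjective for all `T ∈ 𝒯`,
within a commutative diagram with exact rows `L₋₁ → L₀ → T₁ → 0` and
`X → T₀ → T₁ → 0`, then `ε` is a `𝒯`-preenvelope of `X`. -/
theorem pushout_is_preenvelope {R : Type u} [Ring R] (𝒯 : Set (ModuleCat.{u} R))
    {X L₁ L₀ T₀ T₁ : ModuleCat.{u} R}
    (hL₁ : Projective L₁) (hL₀ : Projective L₀)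
    (ρ : L₁ ⟶ L₀) (π₁ : L₀ ⟶ T₁) (δ : L₁ ⟶ X) (ε : X ⟶ T₀) (δ₀ : L₀ ⟶ T₀)
    (π₂ : T₀ ⟶ T₁)
    (hT₀ : T₀ ∈ 𝒯)
    (hρ : ∀ T ∈ 𝒯, ∀ f : L₁ ⟶ T, ∃ g : L₀ ⟶ T, ρ ≫ g = f)
    (hrow₁ : Function.Exact ρ π₁) (hπ₁ : Function.Surjective π₁)
    (hrow₂ : Function.Exact ε π₂) (hπ₂ : Function.Surjective π₂)
    (hcomm : δ₀ ≫ π₂ = π₁)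
    (hpo : IsPushout ρ δ δ₀ ε) :
    ∀ T' ∈ 𝒯, ∀ f : X ⟶ T', ∃ g : T₀ ⟶ T', ε ≫ g = f := by
  intro T' hT' f
  obtain ⟨g₀, hg₀⟩ := hρ T' hT' (δ ≫ f)
  exact ⟨hpo.desc g₀ f hg₀, hpo.inr_desc g₀ f hg₀⟩
end

section
/- Let R be a right hereditary ring, 𝒯 a torsion class of right R-modules, and ε : R → M a 𝒯-preenvelope with U = Ker(ε). If Ext¹_R(R/U, T) = 0 for all T ∈ 𝒯, then Hom_R(U, T) = 0 for all T ∈ 𝒯. -/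
open CategoryTheory Opposite DirectSum

universe u

open Limits

section Aux

variable {R : Type u} [Ring R] (U : Ideal R)

/-- The chain complex `0 → U → R` resolving `R ⧸ U`. -/
noncomputable def resCplx : ChainComplex (ModuleCat.{u} R) ℕ where
  X n := match n with
    | 0 => ModuleCat.of R R
    | 1 => ModuleCat.of R U
    | _ => ModuleCat.of R PUnit
  d i j := match i, j with
    | 1, 0 => ModuleCat.ofHom U.subtype
    | _, _ => 0
  shape i j hij := by
    obtain _ | _ | i := i <;> obtain _ | j := j <;> first | rfl | (exact absurd rfl hij)
  d_comp_d' i j k hij hjk := by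
    simp only [ComplexShape.down_Rel] at hij hjk
    subst hij hjk
    obtain _ | k := k
    · rfl
    · exact zero_comp

lemma resCplx_d_one_zero : (resCplx U).d 1 0 = ModuleCat.ofHom U.subtype := rfl

theorem resCplx_projective (hU : Module.Projective R U) (n : ℕ) :
    Projective ((resCplx U).X n) := by
  obtain _ | _ | n := n
  · exact (IsProjective.iff_projective.{u, u} _).mp inferInstance
  · exact (IsProjective.iff_projective.{u, u} _).mp hU
  · exact (IsProjective.iff_projective.{u, u} _).mp inferInstance

lemma resCplx_exactAt_succ (n : ℕ) : (resCplx U).ExactAt (n + 1) := by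
  rw [HomologicalComplex.exactAt_iff' _ (n + 1 + 1) (n + 1) n (by simp) (by simp)]
  obtain _ | n := n
  · rw [ShortComplex.moduleCat_exact_iff]
    intro (x : U) hx
    have hx0 : (x : R) = 0 := hx
    exact ⟨PUnit.unit, (Subtype.ext hx0.symm : (0 : U) = x)⟩
  · exact ShortComplex.exact_of_isZero_X₂ _
      (ModuleCat.isZero_of_subsingleton (ModuleCat.of R PUnit))

/-- The projective resolution `0 → U → R → R⧸U → 0`. -/
noncomputable def resOf (hU : Module.Projective R U) :
    ProjectiveResolution (ModuleCat.of R (R ⧸ U)) where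
  complex := resCplx U
  projective := resCplx_projective U hU
  π := (ChainComplex.toSingle₀Equiv _ _).symm ⟨ModuleCat.ofHom U.mkQ, by
    ext x
    exact (Submodule.Quotient.mk_eq_zero U).mpr x.2⟩
  quasiIso := ⟨fun n => by
    cases n
    · rw [ChainComplex.quasiIsoAt₀_iff, ShortComplex.quasiIso_iff_of_zeros']
      · constructor
        · rw [ShortComplex.moduleCat_exact_iff]
          intro (x : R) hx
          have hx0 : Submodule.Quotient.mk x = (0 : R ⧸ U) := by
            exact hx
          exact ⟨⟨x, (Submodule.Quotient.mk_eq_zero U).mp hx0⟩, rfl⟩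
        · rw [ModuleCat.epi_iff_surjective]
          intro y
          obtain ⟨x, rfl⟩ := Submodule.mkQ_surjective U y
          refine ⟨x, ?_⟩
          exact congrArg (fun h : (resCplx U).X 0 ⟶ ModuleCat.of R (R ⧸ U) => h x)
            (ChainComplex.toSingle₀Equiv_symm_apply_f_zero _ _)
      all_goals rfl
    · rw [quasiIsoAt_iff_exactAt']
      · apply resCplx_exactAt_succ
      · apply ChainComplex.exactAt_succ_single_obj⟩


lemma extend_of_subsingleton_ext (hU : Module.Projective R U) (T : ModuleCat.{u} R)
    (h : Subsingleton (((Ext ℤ (ModuleCat.{u} R) 1).obj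
      (op (ModuleCat.of R (R ⧸ U)))).obj T))
    (f : ↥U →ₗ[R] ↥T) : ∃ g : R →ₗ[R] ↥T, ∀ u : ↥U, g (u : R) = f u := by
  let P := resOf U hU
  have hzero : IsZero ((P.complex.linearYonedaObj ℤ T).homology 1) :=
    IsZero.of_iso (ModuleCat.isZero_of_subsingleton _) (P.isoExt 1 T).symm
  have hexact := (HomologicalComplex.exactAt_iff_isZero_homology _ 1).mpr hzero
  rw [HomologicalComplex.exactAt_iff' _ 0 1 2 (by simp) (by simp)] at hexact
  rw [ShortComplex.moduleCat_exact_iff] at hexact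
  obtain ⟨g, hg⟩ := hexact (ModuleCat.ofHom f : (P.complex.X 1 ⟶ T)) (by
    exact ModuleCat.hom_ext <| LinearMap.ext fun x => by
      haveI : Subsingleton (↑(unop (op (P.complex.X 2)))) := inferInstanceAs (Subsingleton PUnit)
      rw [Subsingleton.elim x 0, map_zero]
      simp)
  refine ⟨g.hom, fun u => ?_⟩
  have := congrArg (fun k : (P.complex.X 1 ⟶ T) => k.hom u) hg
  exact this

end Aux


/-- Let `R` be a right hereditary ring (every ideal is projective), `𝒯` a torsion
class (closed under epimorphic images, direct sums and extensions), and
`ε : R → M` a `𝒯`-preenvelope with kernel `U`.  If `Ext¹(R/U, T) = 0` for all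
`T ∈ 𝒯`, then `Hom(U, T) = 0` for all `T ∈ 𝒯`. -/
theorem hom_ker_eq_zero_of_hereditary {R : Type u} [Ring R]
    (hher : ∀ I : Ideal R, Module.Projective R I)
    (𝒯 : Set (ModuleCat.{u} R))
    (hquot : ∀ (A B : ModuleCat.{u} R) (f : A ⟶ B),
      A ∈ 𝒯 → Function.Surjective f → B ∈ 𝒯)
    (hsums : ∀ (ι : Type u) (A : ι → ModuleCat.{u} R), (∀ i, A i ∈ 𝒯) →
      ModuleCat.of R (⨁ i, ↥(A i)) ∈ 𝒯)
    (hext : ∀ (A B C : ModuleCat.{u} R) (ι : A ⟶ B) (π : B ⟶ C),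
      A ∈ 𝒯 → C ∈ 𝒯 → Function.Injective ι → Function.Surjective π →
      Function.Exact ι π → B ∈ 𝒯)
    (M : ModuleCat.{u} R) (hM : M ∈ 𝒯) (ε : ModuleCat.of R R ⟶ M)
    (hpre : ∀ T ∈ 𝒯, ∀ f : ModuleCat.of R R ⟶ T, ∃ g : M ⟶ T, ε ≫ g = f)
    (hExt : ∀ T ∈ 𝒯,
      Subsingleton (((Ext ℤ (ModuleCat.{u} R) 1).obj
        (op (ModuleCat.of R (R ⧸ LinearMap.ker ε.hom)))).obj T)) :
    ∀ T ∈ 𝒯, ∀ f : ↥(LinearMap.ker ε.hom) →ₗ[R] ↥T, f = 0 := by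
  intro T hT f
  obtain ⟨g, hg⟩ := extend_of_subsingleton_ext (show Ideal R from LinearMap.ker ε.hom) (hher _) T (hExt T hT) f
  obtain ⟨h, hh⟩ := hpre T hT (ModuleCat.ofHom g)
  refine LinearMap.ext fun u => ?_
  have h1 : h.hom (ε.hom u.1) = g u.1 :=
    congrArg (fun k : ModuleCat.of R R ⟶ T => k.hom u.1) hh
  have h2 : ε.hom u.1 = 0 := u.2
  calc f u = g u.1 := (hg u).symm
    _ = h.hom (ε.hom u.1) := h1.symm
    _ = 0 := by rw [h2, map_zero]
end

section
/- Let R be a ring, 𝒯 a class of R-modules closed under quotients, and ε : R → M a 𝒯-preenvelope with M ∈ 𝒯 and Ext¹_R(M, T) = 0 for all T ∈ 𝒯. Let K = Coker(ε). Then Ext¹_R(K, T) = 0 for all T ∈ 𝒯. -/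
open CategoryTheory Opposite Limits

universe u

private lemma aux_subsingleton_iff_isZero {S : Type*} [Ring S] (M : ModuleCat S) :
    Subsingleton M ↔ IsZero M := by
  constructor
  · intro h; exact ModuleCat.isZero_of_subsingleton M
  · intro h
    have hid : (𝟙 M) = 0 := h.eq_of_src _ _
    refine ⟨fun a b => ?_⟩
    calc a = (𝟙 M) a := rfl
    _ = (0 : M ⟶ M) a := by rw [hid]
    _ = (0 : M ⟶ M) b := rfl
    _ = (𝟙 M) b := by rw [hid]
    _ = b := rfl

private lemma aux_subsingleton_congr {S : Type*} [Ring S] {M N : ModuleCat S} (e : M ≅ N) :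
    Subsingleton M ↔ Subsingleton N := by
  rw [aux_subsingleton_iff_isZero, aux_subsingleton_iff_isZero]
  exact ⟨fun h => h.of_iso e.symm, fun h => h.of_iso e⟩

/-- The extension property: every map from `ker π` to `T` extends to the domain of `π`. -/
private def ExtnProp {S : Type*} [Ring S] {P X : Type*} [AddCommGroup P] [Module S P]
    [AddCommGroup X] [Module S X] (π : P →ₗ[S] X)
    (T : Type*) [AddCommGroup T] [Module S T] : Prop :=
  ∀ f : ↥(LinearMap.ker π) →ₗ[S] T, ∃ g : P →ₗ[S] T, ∀ s : LinearMap.ker π, g s = f s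

private lemma extnProp_transfer {S : Type*} [Ring S] {P Q X T : Type*}
    [AddCommGroup P] [Module S P] [AddCommGroup Q] [Module S Q]
    [AddCommGroup X] [Module S X] [AddCommGroup T] [Module S T]
    [Module.Projective S P] [Module.Projective S Q]
    (π : P →ₗ[S] X) (π' : Q →ₗ[S] X)
    (hπ : Function.Surjective π) (hπ' : Function.Surjective π')
    (h : ExtnProp π T) : ExtnProp π' T := by
  intro f
  obtain ⟨α, hα⟩ := Module.projective_lifting_property π π' hπ
  obtain ⟨β, hβ⟩ := Module.projective_lifting_property π' π hπ'
  have hβker : ∀ x ∈ LinearMap.ker π, β x ∈ LinearMap.ker π' := by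
    intro x hx
    have : π' (β x) = π x := LinearMap.congr_fun hβ x
    simpa [LinearMap.mem_ker, this] using hx
  obtain ⟨G, hG⟩ := h (f ∘ₗ β.restrict hβker)
  have hγ : ∀ x : Q, x - β (α x) ∈ LinearMap.ker π' := by
    intro x
    have h1 : π (α x) = π' x := LinearMap.congr_fun hα x
    have h2 : π' (β (α x)) = π (α x) := LinearMap.congr_fun hβ (α x)
    simp [LinearMap.mem_ker, h1, h2]
  refine ⟨G ∘ₗ α + f ∘ₗ ((LinearMap.id - β ∘ₗ α).codRestrict _ hγ), ?_⟩
  rintro ⟨s, hs⟩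
  have hαs : α s ∈ LinearMap.ker π := by
    have : π (α s) = π' s := LinearMap.congr_fun hα s
    simpa [LinearMap.mem_ker, this] using hs
  have h1 : G (α s) = f ⟨β (α s), hβker _ hαs⟩ := by
    have := hG ⟨α s, hαs⟩
    simpa [LinearMap.restrict_apply] using this
  have : (⟨β (α s), hβker _ hαs⟩ : LinearMap.ker π') + ⟨s - β (α s), hγ s⟩ = ⟨s, hs⟩ := by
    ext; simp
  calc (G ∘ₗ α + f ∘ₗ ((LinearMap.id - β ∘ₗ α).codRestrict _ hγ)) s
      = G (α s) + f ⟨s - β (α s), hγ s⟩ := by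
        simp [LinearMap.codRestrict, LinearMap.sub_apply]
    _ = f ⟨β (α s), hβker _ hαs⟩ + f ⟨s - β (α s), hγ s⟩ := by rw [h1]
    _ = f ⟨s, hs⟩ := by rw [← map_add, this]

variable {R : Type u} [Ring R]

private lemma ext_one_subsingleton_iff (X T : ModuleCat.{u} R) (P : ProjectiveResolution X) :
    Subsingleton (((Ext ℤ (ModuleCat.{u} R) 1).obj (op X)).obj T) ↔
      ExtnProp ((P.π.f 0).hom : P.complex.X 0 →ₗ[R] X) T := by
  have hexact0 : LinearMap.range (P.complex.d 1 0).hom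
      = LinearMap.ker ((P.π.f 0).hom : P.complex.X 0 →ₗ[R] X) :=
    (ShortComplex.moduleCat_exact_iff_range_eq_ker _).1 P.exact₀
  have hexact1 : LinearMap.range (P.complex.d 2 1).hom
      = LinearMap.ker (P.complex.d 1 0).hom :=
    (ShortComplex.moduleCat_exact_iff_range_eq_ker _).1 (P.exact_succ 0)
  rw [aux_subsingleton_congr (P.isoExt 1 T), aux_subsingleton_iff_isZero,
    ← HomologicalComplex.exactAt_iff_isZero_homology,
    HomologicalComplex.exactAt_iff' _ 0 1 2 (by simp) (by simp),
    ShortComplex.moduleCat_exact_iff]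
  have key : (∀ φ : P.complex.X 1 ⟶ T, P.complex.d 2 1 ≫ φ = 0 →
      ∃ ψ : P.complex.X 0 ⟶ T, P.complex.d 1 0 ≫ ψ = φ) ↔
      ExtnProp ((P.π.f 0).hom : P.complex.X 0 →ₗ[R] X) T := by
    constructor
    · intro h f
      have hmem : ∀ x : P.complex.X 1, (P.complex.d 1 0) x ∈
          LinearMap.ker ((P.π.f 0).hom : P.complex.X 0 →ₗ[R] X) := by
        intro x; rw [← hexact0]; exact ⟨x, rfl⟩
      set φ : P.complex.X 1 ⟶ T :=
        ModuleCat.ofHom (f ∘ₗ (P.complex.d 1 0).hom.codRestrict _ hmem :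
          P.complex.X 1 →ₗ[R] T) with hφdef
      have hφ : P.complex.d 2 1 ≫ φ = 0 := by
        ext y
        have hz : (P.complex.d 1 0) ((P.complex.d 2 1) y) = 0 :=
          ConcreteCategory.congr_hom (P.complex.d_comp_d 2 1 0 :
            (P.complex.d 2 1 : P.complex.X 2 ⟶ P.complex.X 1) ≫ P.complex.d 1 0 = 0) y
        have : ((P.complex.d 1 0).hom.codRestrict _ hmem)
            ((P.complex.d 2 1) y) = 0 := by
          ext; exact hz
        show f ((LinearMap.codRestrict (LinearMap.ker ((P.π.f 0).hom : P.complex.X 0 →ₗ[R] X))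
          (P.complex.d 1 0).hom hmem) ((P.complex.d 2 1) y)) = 0
        rw [this, map_zero]
      obtain ⟨ψ, hψ⟩ := h φ hφ
      refine ⟨ψ.hom, ?_⟩
      rintro ⟨s, hs⟩
      obtain ⟨x, rfl⟩ : s ∈ LinearMap.range
          (P.complex.d 1 0).hom := hexact0 ▸ hs
      have := ConcreteCategory.congr_hom (hψ : (P.complex.d 1 0 ≫ ψ : _) = φ) x
      exact this
    · intro h φ hφ
      have hker : LinearMap.ker (P.complex.d 1 0).hom
          ≤ LinearMap.ker φ.hom := by
        rw [← hexact1]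
        rintro _ ⟨y, rfl⟩
        have := ConcreteCategory.congr_hom (hφ : (P.complex.d 2 1 ≫ φ : _) = 0) y
        simpa [ModuleCat.hom_comp] using this
      set e := LinearMap.quotKerEquivRange
        (P.complex.d 1 0).hom with he
      obtain ⟨g, hg⟩ := h ((Submodule.liftQ _ φ.hom hker) ∘ₗ
        (e.symm : _ →ₗ[R] _) ∘ₗ Submodule.inclusion hexact0.ge)
      refine ⟨ModuleCat.ofHom g, ?_⟩
      ext x
      have hx : (P.complex.d 1 0) x ∈ LinearMap.ker ((P.π.f 0).hom : P.complex.X 0 →ₗ[R] X) :=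
        hexact0 ▸ ⟨x, rfl⟩
      have h1 := hg ⟨(P.complex.d 1 0) x, hx⟩
      have h2 : (Submodule.inclusion hexact0.ge) (⟨(P.complex.d 1 0) x, hx⟩ :
          LinearMap.ker ((P.π.f 0).hom : P.complex.X 0 →ₗ[R] X)) = ⟨(P.complex.d 1 0) x, ⟨x, rfl⟩⟩ :=
        rfl
      have h3 : e.symm ⟨(P.complex.d 1 0) x, ⟨x, rfl⟩⟩ = Submodule.Quotient.mk x := by
        rw [LinearEquiv.symm_apply_eq]
        rfl
      calc (g ∘ₗ (P.complex.d 1 0).hom) x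
          = g ((P.complex.d 1 0) x) := rfl
        _ = ((Submodule.liftQ _ φ.hom hker) ∘ₗ
            (e.symm : _ →ₗ[R] _) ∘ₗ Submodule.inclusion hexact0.ge)
            ⟨(P.complex.d 1 0) x, hx⟩ := h1
        _ = φ x := by
            rw [LinearMap.comp_apply, LinearMap.comp_apply, h2]
            erw [h3]
            exact Submodule.liftQ_apply _ φ.hom x
  rw [← key]
  constructor
  · intro h φ hφ
    exact h φ hφ
  · intro h φ hφ
    exact h φ hφ

/-- Let `𝒯` be a class of modules closed under quotients and `ε : R → M` a
`𝒯`-preenvelope with `M ∈ 𝒯` and `Ext¹(M, T) = 0` for all `T ∈ 𝒯`.  If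
`K = Coker(ε)`, then `Ext¹(K, T) = 0` for all `T ∈ 𝒯`. -/
theorem ext_coker_vanish {R : Type u} [Ring R] (𝒯 : Set (ModuleCat.{u} R))
    (hquot : ∀ (A B : ModuleCat.{u} R) (f : A ⟶ B),
      A ∈ 𝒯 → Function.Surjective f → B ∈ 𝒯)
    (M : ModuleCat.{u} R) (hM : M ∈ 𝒯) (ε : ModuleCat.of R R ⟶ M)
    (hpre : ∀ T ∈ 𝒯, ∀ f : ModuleCat.of R R ⟶ T, ∃ g : M ⟶ T, ε ≫ g = f)
    (hExtM : ∀ T ∈ 𝒯,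
      Subsingleton (((Ext ℤ (ModuleCat.{u} R) 1).obj (op M)).obj T)) :
    ∀ T ∈ 𝒯,
      Subsingleton (((Ext ℤ (ModuleCat.{u} R) 1).obj
        (op (ModuleCat.of R (↥M ⧸ LinearMap.range ε.hom)))).obj T) := by
  intro T hT
  set K : ModuleCat.{u} R := ModuleCat.of R (↥M ⧸ LinearMap.range ε.hom) with hK
  obtain ⟨PK⟩ := (HasProjectiveResolution.out (Z := K))
  obtain ⟨PM⟩ := (HasProjectiveResolution.out (Z := M))
  rw [ext_one_subsingleton_iff K T PK]
  -- basic data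
  set P0 := PK.complex.X 0 with hP0
  set πK : ↥P0 →ₗ[R] ↥K := ((PK.π.f 0).hom : P0 →ₗ[R] K) with hπK
  have hπKsurj : Function.Surjective πK :=
    (ModuleCat.epi_iff_surjective (PK.π.f 0)).1 inferInstance
  -- projectivity of the pieces
  haveI hP0proj : Module.Projective R ↥P0 := by
    rw [IsProjective.iff_projective.{u,u}]
    show Projective (ModuleCat.of R ↥P0)
    rw [ModuleCat.of_coe]
    infer_instance
  haveI hPM0proj : Module.Projective R ↥(PM.complex.X 0) := by
    rw [IsProjective.iff_projective.{u,u}]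
    show Projective (ModuleCat.of R ↥(PM.complex.X 0))
    rw [ModuleCat.of_coe]
    infer_instance
  -- a lift `q : P0 →ₗ M` of `πK` along the quotient map
  have hmkQsurj : Function.Surjective ((LinearMap.range ε.hom).mkQ) :=
    Submodule.mkQ_surjective _
  obtain ⟨q, hq⟩ := Module.projective_lifting_property
    ((LinearMap.range ε.hom).mkQ) (πK : ↥P0 →ₗ[R] (↥M ⧸ LinearMap.range ε.hom)) hmkQsurj
  -- the surjection `r : P0 × R → M`
  set r : (↥P0 × R) →ₗ[R] ↥M := q.coprod ε.hom with hr
  have hrsurj : Function.Surjective r := by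
    intro m
    obtain ⟨x, hx⟩ := hπKsurj (Submodule.Quotient.mk m)
    have h1 : (LinearMap.range ε.hom).mkQ (q x) = Submodule.Quotient.mk m := by
      rw [show (LinearMap.range ε.hom).mkQ (q x) = πK x from LinearMap.congr_fun hq x, hx]
    have h2 : m - q x ∈ LinearMap.range ε.hom :=
      (Submodule.Quotient.eq _).1 (by simpa using h1.symm)
    obtain ⟨a, ha⟩ := h2
    refine ⟨(x, a), ?_⟩
    show q x + ε.hom a = m
    rw [ha]
    abel
  -- transfer the extension property from `M`'s resolution to `r`
  have hEM : ExtnProp ((PM.π.f 0).hom : PM.complex.X 0 →ₗ[R] M) ↥T :=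
    (ext_one_subsingleton_iff M T PM).1 (hExtM T hT)
  have hPMsurj : Function.Surjective ((PM.π.f 0).hom : PM.complex.X 0 →ₗ[R] M) :=
    (ModuleCat.epi_iff_surjective (PM.π.f 0)).1 inferInstance
  have hEr : ExtnProp r ↥T :=
    extnProp_transfer ((PM.π.f 0).hom : PM.complex.X 0 →ₗ[R] M) r hPMsurj hrsurj hEM
  -- now prove the extension property for `πK`
  intro f
  have hfst : ∀ z ∈ LinearMap.ker r, (LinearMap.fst R ↥P0 R) z ∈ LinearMap.ker πK := by
    rintro ⟨x, a⟩ hz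
    have hz' : q x + ε a = 0 := hz
    have : πK x = (LinearMap.range ε.hom).mkQ (q x) := (LinearMap.congr_fun hq x).symm
    rw [LinearMap.mem_ker]
    show πK x = 0
    have hqx : q x = -(ε a) := by rw [eq_neg_iff_add_eq_zero]; exact hz'
    rw [this, hqx, map_neg, neg_eq_zero]
    exact (Submodule.Quotient.mk_eq_zero _).2 ⟨a, rfl⟩
  obtain ⟨gt, hgt⟩ := hEr (f ∘ₗ (LinearMap.fst R ↥P0 R).restrict hfst)
  set φ : ModuleCat.of R R ⟶ T := ModuleCat.ofHom (gt ∘ₗ LinearMap.inr R ↥P0 R : R →ₗ[R] ↥T) with hφ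
  obtain ⟨g₂, hg₂⟩ := hpre T hT φ
  refine ⟨(gt ∘ₗ LinearMap.inl R ↥P0 R) - (g₂.hom ∘ₗ q), ?_⟩
  rintro ⟨s, hs⟩
  have hqs : q s ∈ LinearMap.range ε.hom := by
    have h0 : (LinearMap.range ε.hom).mkQ (q s) = 0 := by
      rw [show (LinearMap.range ε.hom).mkQ (q s) = πK s from LinearMap.congr_fun hq s]
      exact hs
    simpa [Submodule.Quotient.mk_eq_zero] using h0
  obtain ⟨a, ha⟩ := hqs
  have hmem : ((s, -a) : ↥P0 × R) ∈ LinearMap.ker r := by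
    show q s + ε.hom (-a) = 0
    rw [map_neg, ha]
    abel
  have hval := hgt ⟨(s, -a), hmem⟩
  have hres : ((LinearMap.fst R ↥P0 R).restrict hfst) ⟨(s, -a), hmem⟩ = ⟨s, hs⟩ := by
    ext; rfl
  have hεa : g₂.hom (ε.hom a) = gt (0, a) := by
    have := ConcreteCategory.congr_hom (hg₂ : ε ≫ g₂ = φ) a
    simpa [hφ] using this
  have hsplit : gt ((s : ↥P0), (-a : R)) = gt (s, 0) - gt (0, a) := by
    have : ((s, -a) : ↥P0 × R) = (s, 0) - (0, a) := by simp
    rw [this, map_sub]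
  calc ((gt ∘ₗ LinearMap.inl R ↥P0 R) - (g₂.hom ∘ₗ q)) s
      = gt (s, 0) - g₂.hom (q s) := rfl
    _ = gt (s, 0) - gt (0, a) := by rw [← ha, hεa]
    _ = gt (s, -a) := hsplit.symm
    _ = f ⟨s, hs⟩ := by rw [hval, LinearMap.comp_apply]; exact congrArg f hres
end
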